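/- arXiv:2003.09174 — 9 statements merged into one kernel-verified Lean document; each statement's English description precedes it below -/
import Mathlib

section
/- Let A, B : E → E* be self-adjoint linear operators on an n-dimensional real vector space E with 0 ≺ A ⪯ B. Then for any nonzero u ∈ E, A - (A u u* A)/⟨A u, u⟩ ⪯ B - (B u u* B)/⟨B u, u⟩, i.e., for all h ∈ E, ⟨A h, h⟩ - ⟨A u, h⟩²/⟨A u, u⟩ ≤ ⟨B h, h⟩ - ⟨B u, h⟩²/⟨B u, u⟩. -/
open Matrix

theorem projection_lemma {n : ℕ} (A B : Matrix (Fin n) (Fin n) ℝ)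
    (hA : A.PosDef) (hB : B.IsSymm) (hAB : (B - A).PosSemidef)
    (u : Fin n → ℝ) (hu : u ≠ 0) :
    ∀ h : Fin n → ℝ,
      h ⬝ᵥ A.mulVec h - (u ⬝ᵥ A.mulVec h) ^ 2 / (u ⬝ᵥ A.mulVec u) ≤
        h ⬝ᵥ B.mulVec h - (u ⬝ᵥ B.mulVec h) ^ 2 / (u ⬝ᵥ B.mulVec u) := by
  intro h
  have symmA : ∀ x y : Fin n → ℝ, x ⬝ᵥ A.mulVec y = y ⬝ᵥ A.mulVec x := by
    intro x y
    rw [dotProduct_mulVec, ← mulVec_transpose, ← conjTranspose_eq_transpose_of_trivial, hA.isHermitian.eq, dotProduct_comm]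
  have symmB : ∀ x y : Fin n → ℝ, x ⬝ᵥ B.mulVec y = y ⬝ᵥ B.mulVec x := by
    intro x y
    rw [dotProduct_mulVec, ← mulVec_transpose, hB.eq, dotProduct_comm]
  have ha : 0 < u ⬝ᵥ A.mulVec u := by simpa using hA.dotProduct_mulVec_pos hu
  have hba : u ⬝ᵥ A.mulVec u ≤ u ⬝ᵥ B.mulVec u := by
    have := hAB.dotProduct_mulVec_nonneg u
    simp only [sub_mulVec, dotProduct_sub, RCLike.star_def, starRingEnd_apply] at this
    simpa using this
  have hb : 0 < u ⬝ᵥ B.mulVec u := lt_of_lt_of_le ha hba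
  set t : ℝ := (u ⬝ᵥ B.mulVec h) / (u ⬝ᵥ B.mulVec u) with ht
  set v : Fin n → ℝ := h - t • u with hv
  have expand : ∀ M : Matrix (Fin n) (Fin n) ℝ,
      v ⬝ᵥ M.mulVec v =
        h ⬝ᵥ M.mulVec h - t * (h ⬝ᵥ M.mulVec u) - t * (u ⬝ᵥ M.mulVec h)
          + t * t * (u ⬝ᵥ M.mulVec u) := by
    intro M
    simp only [hv, mulVec_sub, mulVec_smul, dotProduct_sub, sub_dotProduct,
      dotProduct_smul, smul_dotProduct, smul_eq_mul]
    ring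
  have key : v ⬝ᵥ A.mulVec v ≤ v ⬝ᵥ B.mulVec v := by
    have := hAB.dotProduct_mulVec_nonneg v
    simp only [sub_mulVec, dotProduct_sub, RCLike.star_def, starRingEnd_apply] at this
    simpa [sub_nonneg] using this
  have eA := expand A
  have eB := expand B
  rw [symmA h u] at eA
  rw [symmB h u] at eB
  -- B side: v ⬝ᵥ B v = hBh - q²/b  exactly
  have hBside : v ⬝ᵥ B.mulVec v
      = h ⬝ᵥ B.mulVec h - (u ⬝ᵥ B.mulVec h) ^ 2 / (u ⬝ᵥ B.mulVec u) := by
    rw [eB, ht]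
    field_simp
    ring
  -- A side: v ⬝ᵥ A v ≥ hAh - p²/a
  have hAside : h ⬝ᵥ A.mulVec h - (u ⬝ᵥ A.mulVec h) ^ 2 / (u ⬝ᵥ A.mulVec u)
      ≤ v ⬝ᵥ A.mulVec v := by
    rw [eA]
    have hsq : 0 ≤ (u ⬝ᵥ A.mulVec u) * (t - (u ⬝ᵥ A.mulVec h) / (u ⬝ᵥ A.mulVec u)) ^ 2 :=
      mul_nonneg ha.le (sq_nonneg _)
    have hdiv : (u ⬝ᵥ A.mulVec h) ^ 2 / (u ⬝ᵥ A.mulVec u) * (u ⬝ᵥ A.mulVec u)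
        = (u ⬝ᵥ A.mulVec h) ^ 2 := div_mul_cancel₀ _ ha.ne'
    nlinarith [sq_nonneg (t * (u ⬝ᵥ A.mulVec u) - u ⬝ᵥ A.mulVec h), ha, sq_nonneg t]
  calc h ⬝ᵥ A.mulVec h - (u ⬝ᵥ A.mulVec h) ^ 2 / (u ⬝ᵥ A.mulVec u)
      ≤ v ⬝ᵥ A.mulVec v := hAside
    _ ≤ v ⬝ᵥ B.mulVec v := key
    _ = _ := hBside
end

section
/- Let A, G be symmetric positive definite n×n matrices, φ ∈ ℝ, and u a nonzero vector. Define the Broyden update Broyd_φ(A,G,u) = φ[G - (A u uᵀ G + G u uᵀ A)/(uᵀ A u) + (uᵀ G u/(uᵀ A u) + 1)(A u uᵀ A)/(uᵀ A u)] + (1-φ)[G - (G u uᵀ G)/(uᵀ G u) + (A u uᵀ A)/(uᵀ A u)]. Then det(G⁻¹ Broyd_φ(A,G,u)) = φ (uᵀ A G⁻¹ A u)/(uᵀ A u) + (1-φ)(uᵀ A u)/(uᵀ G u). -/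
open Matrix

noncomputable def DFPupd {n : ℕ} (A G : Matrix (Fin n) (Fin n) ℝ) (u : Fin n → ℝ) :
    Matrix (Fin n) (Fin n) ℝ :=
  G - ((u ⬝ᵥ A.mulVec u)⁻¹) •
      (vecMulVec (A.mulVec u) (G.mulVec u) + vecMulVec (G.mulVec u) (A.mulVec u))
    + (((u ⬝ᵥ G.mulVec u) / (u ⬝ᵥ A.mulVec u) + 1) * (u ⬝ᵥ A.mulVec u)⁻¹) •
      vecMulVec (A.mulVec u) (A.mulVec u)

noncomputable def BFGSupd {n : ℕ} (A G : Matrix (Fin n) (Fin n) ℝ) (u : Fin n → ℝ) :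
    Matrix (Fin n) (Fin n) ℝ :=
  G - ((u ⬝ᵥ G.mulVec u)⁻¹) • vecMulVec (G.mulVec u) (G.mulVec u)
    + ((u ⬝ᵥ A.mulVec u)⁻¹) • vecMulVec (A.mulVec u) (A.mulVec u)

noncomputable def Broyd {n : ℕ} (φ : ℝ) (A G : Matrix (Fin n) (Fin n) ℝ) (u : Fin n → ℝ) :
    Matrix (Fin n) (Fin n) ℝ :=
  if u = 0 then G else φ • DFPupd A G u + (1 - φ) • BFGSupd A G u

/-- Closeness measure θ(A, G, u). -/
noncomputable def theta {n : ℕ} (A G : Matrix (Fin n) (Fin n) ℝ) (u : Fin n → ℝ) : ℝ :=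
  if u = 0 then 0 else
    Real.sqrt ((u ⬝ᵥ ((G - A) * A⁻¹ * (G - A)).mulVec u) /
      (u ⬝ᵥ (G * A⁻¹ * G).mulVec u))

/-- Trace potential σ(A, G). -/
noncomputable def sigmaPot {n : ℕ} (A G : Matrix (Fin n) (Fin n) ℝ) : ℝ :=
  (A⁻¹ * (G - A)).trace

/-- Byrd–Nocedal potential ψ(A, G). -/
noncomputable def psiPot {n : ℕ} (A G : Matrix (Fin n) (Fin n) ℝ) : ℝ :=
  (A⁻¹ * (G - A)).trace - Real.log (A⁻¹ * G).det

noncomputable def omegaFn (t : ℝ) : ℝ := t - Real.log (1 + t)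

private lemma mul_vecMulVec' {n : ℕ} (M : Matrix (Fin n) (Fin n) ℝ) (x y : Fin n → ℝ) :
    M * vecMulVec x y = vecMulVec (M.mulVec x) y := by
  ext i j
  simp [Matrix.mul_apply, vecMulVec_apply, Matrix.mulVec, dotProduct,
    Finset.sum_mul, mul_assoc]

private lemma symm_dot_fact {n : ℕ} (G : Matrix (Fin n) (Fin n) ℝ) (hGsymm : Gᵀ = G)
    (hGG : G * G⁻¹ = 1) (u w : Fin n → ℝ) :
    (G.mulVec u) ⬝ᵥ (G⁻¹.mulVec w) = u ⬝ᵥ w := by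
  rw [dotProduct_mulVec, show G.mulVec u = Gᵀ.mulVec u by rw [hGsymm],
    mulVec_transpose, vecMul_vecMul, hGG, vecMul_one]

theorem det_broyden_update {n : ℕ} (A G : Matrix (Fin n) (Fin n) ℝ)
    (hA : A.PosDef) (hG : G.PosDef) (φ : ℝ) (u : Fin n → ℝ) (hu : u ≠ 0) :
    (G⁻¹ * Broyd φ A G u).det =
      φ * (u ⬝ᵥ (A * G⁻¹ * A).mulVec u) / (u ⬝ᵥ A.mulVec u) +
        (1 - φ) * (u ⬝ᵥ A.mulVec u) / (u ⬝ᵥ G.mulVec u) := by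

  classical
  set a : ℝ := u ⬝ᵥ A.mulVec u with ha_def
  set g : ℝ := u ⬝ᵥ G.mulVec u with hg_def
  have ha : a ≠ 0 := ne_of_gt (hA.dotProduct_mulVec_pos hu)
  have hg : g ≠ 0 := ne_of_gt (hG.dotProduct_mulVec_pos hu)
  have hGdet : IsUnit G.det := isUnit_iff_ne_zero.2 (ne_of_gt hG.det_pos)
  have hGsymm : Gᵀ = G := hG.1
  have hAsymm : Aᵀ = A := hA.1
  have hGinv : G⁻¹ * G = 1 := nonsing_inv_mul G hGdet
  have hGinv' : G * G⁻¹ = 1 := mul_nonsing_inv G hGdet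
  set p : Fin n → ℝ := G⁻¹.mulVec (A.mulVec u) with hp_def
  set c : ℝ := u ⬝ᵥ (A * G⁻¹ * A).mulVec u with hc_def
  set s : ℝ := φ * (g / a + 1) / a + (1 - φ) / a with hs_def
  set r₁ : Fin n → ℝ := (-(φ / a)) • G.mulVec u + s • A.mulVec u with hr1_def
  set r₂ : Fin n → ℝ :=
    (-(φ / a)) • A.mulVec u + (-((1 - φ) / g)) • G.mulVec u with hr2_def
  -- Step A: the Broyden update is G plus two rank-one terms
  have hB : Broyd φ A G u
      = G + vecMulVec (A.mulVec u) r₁ + vecMulVec (G.mulVec u) r₂ := by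
    rw [Broyd, if_neg hu]
    ext i j
    simp only [DFPupd, BFGSupd, hr1_def, hr2_def, hs_def, Matrix.add_apply,
      Matrix.sub_apply, Matrix.smul_apply, vecMulVec_apply, Pi.add_apply,
      Pi.smul_apply, smul_eq_mul, ← ha_def, ← hg_def]
    ring
  -- Step B: G⁻¹ * Broyd = 1 + C * D for an n×2 matrix C and 2×n matrix D
  set C : Matrix (Fin n) (Fin 2) ℝ := Matrix.of (fun i j => ![p, u] j i) with hC_def
  set D : Matrix (Fin 2) (Fin n) ℝ := Matrix.of ![r₁, r₂] with hD_def
  have hGinvGu : G⁻¹.mulVec (G.mulVec u) = u := by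
    rw [Matrix.mulVec_mulVec, hGinv, Matrix.one_mulVec]
  have hkey : G⁻¹ * Broyd φ A G u = 1 + C * D := by
    rw [hB, Matrix.mul_add, Matrix.mul_add, hGinv, mul_vecMulVec', mul_vecMulVec',
      hGinvGu, ← hp_def, add_assoc]
    congr 1
    ext i j
    simp [hC_def, hD_def, Matrix.mul_apply, vecMulVec_apply, Fin.sum_univ_two,
      mul_comm]
  -- dot product facts
  have hGup : G.mulVec u ⬝ᵥ p = a := by
    rw [hp_def, symm_dot_fact G hGsymm hGinv' u (A.mulVec u), ha_def]
  have hAup : A.mulVec u ⬝ᵥ p = c := by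
    rw [hc_def, ← Matrix.mulVec_mulVec, ← Matrix.mulVec_mulVec, hp_def,
      dotProduct_mulVec u A (G⁻¹.mulVec (A.mulVec u)),
      show u ᵥ* A = A.mulVec u by rw [← vecMul_transpose, hAsymm]]
  have hAuu : A.mulVec u ⬝ᵥ u = a := by rw [dotProduct_comm, ha_def]
  have hGuu : G.mulVec u ⬝ᵥ u = g := by rw [dotProduct_comm, hg_def]
  -- the 2×2 matrix D * C
  have hDC : D * C = !![r₁ ⬝ᵥ p, r₁ ⬝ᵥ u; r₂ ⬝ᵥ p, r₂ ⬝ᵥ u] := by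
    ext i j
    fin_cases i <;> fin_cases j <;>
      simp [hC_def, hD_def, Matrix.mul_apply, dotProduct]
  have hr1p : r₁ ⬝ᵥ p = -(φ / a) * a + s * c := by
    rw [hr1_def, add_dotProduct, smul_dotProduct, smul_dotProduct, hGup, hAup,
      smul_eq_mul, smul_eq_mul]
  have hr1u : r₁ ⬝ᵥ u = -(φ / a) * g + s * a := by
    rw [hr1_def, add_dotProduct, smul_dotProduct, smul_dotProduct, hGuu, hAuu,
      smul_eq_mul, smul_eq_mul]
  have hr2p : r₂ ⬝ᵥ p = -(φ / a) * c + -((1 - φ) / g) * a := by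
    rw [hr2_def, add_dotProduct, smul_dotProduct, smul_dotProduct, hAup, hGup,
      smul_eq_mul, smul_eq_mul]
  have hr2u : r₂ ⬝ᵥ u = -(φ / a) * a + -((1 - φ) / g) * g := by
    rw [hr2_def, add_dotProduct, smul_dotProduct, smul_dotProduct, hAuu, hGuu,
      smul_eq_mul, smul_eq_mul]
  rw [hkey, Matrix.det_one_add_mul_comm, hDC]
  rw [show (1 : Matrix (Fin 2) (Fin 2) ℝ) + !![r₁ ⬝ᵥ p, r₁ ⬝ᵥ u; r₂ ⬝ᵥ p, r₂ ⬝ᵥ u]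
      = !![1 + r₁ ⬝ᵥ p, r₁ ⬝ᵥ u; r₂ ⬝ᵥ p, 1 + r₂ ⬝ᵥ u] by
    ext i j; fin_cases i <;> fin_cases j <;> simp [Matrix.one_apply]]
  rw [Matrix.det_fin_two_of, hr1p, hr1u, hr2p, hr2u, hs_def]
  field_simp
  ring
end

section
/- Let A, G be symmetric positive definite n×n matrices satisfying A/ξ ⪯ G ⪯ η A for some ξ, η ≥ 1. Then for any vector u and any φ ∈ [0,1], the Broyden-class update satisfies A/ξ ⪯ Broyd_φ(A,G,u) ⪯ η A. -/
set_option maxHeartbeats 1000000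

open Matrix

section Aux

variable {n : ℕ}

private lemma quad_vmv (a b x : Fin n → ℝ) :
    x ⬝ᵥ (vecMulVec a b) *ᵥ x = (x ⬝ᵥ a) * (x ⬝ᵥ b) := by
  simp [mulVec, vecMulVec_apply, dotProduct, Finset.mul_sum, Finset.sum_mul]
  rw [Finset.sum_comm]
  congr 1; ext i; congr 1; ext j; ring

private lemma dot_symm {M : Matrix (Fin n) (Fin n) ℝ} (hM : M.IsHermitian) (x y : Fin n → ℝ) :
    x ⬝ᵥ M *ᵥ y = y ⬝ᵥ M *ᵥ x := by
  have ht : Mᵀ = M := by rw [← conjTranspose_eq_transpose_of_trivial, hM.eq]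
  rw [dotProduct_mulVec, ← mulVec_transpose, ht, dotProduct_comm]

private lemma quad_sub_smul {M : Matrix (Fin n) (Fin n) ℝ} (hM : M.IsHermitian)
    (x u : Fin n → ℝ) (c : ℝ) :
    (x - c • u) ⬝ᵥ M *ᵥ (x - c • u)
      = x ⬝ᵥ M *ᵥ x - 2 * c * (x ⬝ᵥ M *ᵥ u) + c ^ 2 * (u ⬝ᵥ M *ᵥ u) := by
  have h := dot_symm hM u x
  simp only [Matrix.mulVec_sub, Matrix.mulVec_smul, dotProduct_sub, sub_dotProduct,
    dotProduct_smul, smul_dotProduct, smul_eq_mul, h]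
  ring

private lemma psd_quad {M : Matrix (Fin n) (Fin n) ℝ} (h : M.PosSemidef) (x : Fin n → ℝ) :
    0 ≤ x ⬝ᵥ M *ᵥ x := by simpa using h.dotProduct_mulVec_nonneg x

private lemma posdef_quad {M : Matrix (Fin n) (Fin n) ℝ} (h : M.PosDef) {x : Fin n → ℝ}
    (hx : x ≠ 0) : 0 < x ⬝ᵥ M *ᵥ x := by simpa using h.dotProduct_mulVec_pos hx

private lemma herm_smul (c : ℝ) {M : Matrix (Fin n) (Fin n) ℝ} (h : M.IsHermitian) :
    (c • M).IsHermitian := by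
  unfold Matrix.IsHermitian at *
  rw [conjTranspose_smul, h]; simp

private lemma herm_vmv (a : Fin n → ℝ) : (vecMulVec a a).IsHermitian := by
  ext i j; simp [conjTranspose_apply, vecMulVec_apply, mul_comm]

private lemma herm_pair (a b : Fin n → ℝ) :
    (vecMulVec a b + vecMulVec b a).IsHermitian := by
  ext i j; simp [conjTranspose_apply, vecMulVec_apply]; ring

private lemma scalar_core (a g p q qA qG ξ η φ Gy Ay Gz Az : ℝ)
    (ha : 0 < a) (hg : 0 < g) (hξ : 1 ≤ ξ) (hη : 1 ≤ η) (hφ0 : 0 ≤ φ) (hφ1 : φ ≤ 1)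
    (hqA : 0 ≤ qA)
    (hGy : Gy = qG - 2*(p/a)*q + (p/a)^2*g)
    (hAy : Ay = qA - 2*(p/a)*p + (p/a)^2*a)
    (hGz : Gz = qG - 2*(q/g)*q + (q/g)^2*g)
    (hAz : Az = qA - 2*(q/g)*p + (q/g)^2*a)
    (h1 : ξ⁻¹ * Ay ≤ Gy) (h2 : Gy ≤ η * Ay) (h3 : ξ⁻¹ * Az ≤ Gz) :
    ξ⁻¹ * qA ≤ φ * (qG - a⁻¹*(2*(p*q)) + ((g/a+1)*a⁻¹)*p^2) +
        (1-φ) * (qG - g⁻¹*q^2 + a⁻¹*p^2) ∧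
      φ * (qG - a⁻¹*(2*(p*q)) + ((g/a+1)*a⁻¹)*p^2) +
        (1-φ) * (qG - g⁻¹*q^2 + a⁻¹*p^2) ≤ η * qA := by
  have hξpos : 0 < ξ⁻¹ := by positivity
  have hξ1 : ξ⁻¹ ≤ 1 := by rw [inv_le_one_iff₀]; right; linarith
  have hpa : 0 ≤ p^2/a := by positivity
  have hAy' : Ay = qA - p^2/a := by rw [hAy]; field_simp; ring
  have hAzAy : Az = Ay + a * (q/g - p/a)^2 := by rw [hAz, hAy]; field_simp; ring
  have hGzGy : Gy = Gz + g * (p/a - q/g)^2 := by rw [hGz, hGy]; field_simp; ring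
  have hAyAz : Ay ≤ Az := by nlinarith [mul_nonneg ha.le (sq_nonneg (q/g - p/a))]
  have hGzy : Gz ≤ Gy := by nlinarith [mul_nonneg hg.le (sq_nonneg (p/a - q/g))]
  have hD : qG - a⁻¹*(2*(p*q)) + ((g/a+1)*a⁻¹)*p^2 = Gy + p^2/a := by
    rw [hGy]; field_simp; ring
  have hB : qG - g⁻¹*q^2 + a⁻¹*p^2 = Gz + p^2/a := by
    rw [hGz]; field_simp; ring
  rw [hD, hB]
  have e1 : η * Ay = η*qA - η*(p^2/a) := by rw [hAy']; ring
  have e2 : ξ⁻¹ * Ay = ξ⁻¹*qA - ξ⁻¹*(p^2/a) := by rw [hAy']; ring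
  have k1 : 0 ≤ (η - 1) * (p^2/a) := by
    apply mul_nonneg _ hpa; linarith
  have k2 : 0 ≤ (1 - ξ⁻¹) * (p^2/a) := by
    apply mul_nonneg _ hpa; linarith
  have hDu : Gy + p^2/a ≤ η * qA := by nlinarith
  have hBu : Gz + p^2/a ≤ η * qA := by linarith
  have hDl : ξ⁻¹ * qA ≤ Gy + p^2/a := by nlinarith
  have hBl : ξ⁻¹ * qA ≤ Gz + p^2/a := by
    have := mul_le_mul_of_nonneg_left hAyAz hξpos.le
    nlinarith
  have s1 : φ*(η*qA) + (1-φ)*(η*qA) = η*qA := by ring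
  have s2 : φ*(ξ⁻¹*qA) + (1-φ)*(ξ⁻¹*qA) = ξ⁻¹*qA := by ring
  constructor
  · have t1 := mul_le_mul_of_nonneg_left hDl hφ0
    have t2 := mul_le_mul_of_nonneg_left hBl (by linarith : (0:ℝ) ≤ 1 - φ)
    linarith
  · have t1 := mul_le_mul_of_nonneg_left hDu hφ0
    have t2 := mul_le_mul_of_nonneg_left hBu (by linarith : (0:ℝ) ≤ 1 - φ)
    linarith

end Aux

theorem broyden_preserves_bounds {n : ℕ} (A G : Matrix (Fin n) (Fin n) ℝ)
    (hA : A.PosDef) (hG : G.PosDef) (ξ η : ℝ) (hξ : 1 ≤ ξ) (hη : 1 ≤ η)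
    (hlow : (G - ξ⁻¹ • A).PosSemidef) (hup : (η • A - G).PosSemidef)
    (u : Fin n → ℝ) (φ : ℝ) (hφ : φ ∈ Set.Icc (0 : ℝ) 1) :
    (Broyd φ A G u - ξ⁻¹ • A).PosSemidef ∧ (η • A - Broyd φ A G u).PosSemidef := by
  obtain ⟨hφ0, hφ1⟩ := hφ
  by_cases hu : u = 0
  · simp only [Broyd, if_pos hu]
    exact ⟨hlow, hup⟩
  · have ha : 0 < u ⬝ᵥ A *ᵥ u := posdef_quad hA hu
    have hg : 0 < u ⬝ᵥ G *ᵥ u := posdef_quad hG hu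
    -- expansion of quadratic forms of the differences
    have elow : ∀ y : Fin n → ℝ, y ⬝ᵥ (G - ξ⁻¹ • A) *ᵥ y
        = y ⬝ᵥ G *ᵥ y - ξ⁻¹ * (y ⬝ᵥ A *ᵥ y) := by
      intro y
      simp [Matrix.sub_mulVec, Matrix.smul_mulVec, dotProduct_sub, dotProduct_smul]
    have eup : ∀ y : Fin n → ℝ, y ⬝ᵥ (η • A - G) *ᵥ y
        = η * (y ⬝ᵥ A *ᵥ y) - y ⬝ᵥ G *ᵥ y := by
      intro y
      simp [Matrix.sub_mulVec, Matrix.smul_mulVec, dotProduct_sub, dotProduct_smul]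
    have key : ∀ x : Fin n → ℝ,
        ξ⁻¹ * (x ⬝ᵥ A *ᵥ x) ≤ x ⬝ᵥ (Broyd φ A G u) *ᵥ x ∧
          x ⬝ᵥ (Broyd φ A G u) *ᵥ x ≤ η * (x ⬝ᵥ A *ᵥ x) := by
      intro x
      have hquad : x ⬝ᵥ (Broyd φ A G u) *ᵥ x
          = φ * ((x ⬝ᵥ G *ᵥ x) - (u ⬝ᵥ A *ᵥ u)⁻¹ * (2*((x ⬝ᵥ A *ᵥ u)*(x ⬝ᵥ G *ᵥ u)))
              + (((u ⬝ᵥ G *ᵥ u)/(u ⬝ᵥ A *ᵥ u)+1)*(u ⬝ᵥ A *ᵥ u)⁻¹)*(x ⬝ᵥ A *ᵥ u)^2)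
            + (1-φ) * ((x ⬝ᵥ G *ᵥ x) - (u ⬝ᵥ G *ᵥ u)⁻¹*(x ⬝ᵥ G *ᵥ u)^2
              + (u ⬝ᵥ A *ᵥ u)⁻¹*(x ⬝ᵥ A *ᵥ u)^2) := by
        simp only [Broyd, if_neg hu, DFPupd, BFGSupd, Matrix.add_mulVec, Matrix.sub_mulVec,
          Matrix.smul_mulVec, dotProduct_add, dotProduct_sub, dotProduct_smul,
          smul_eq_mul, quad_vmv]
        ring
      rw [hquad]
      set c : ℝ := (x ⬝ᵥ A *ᵥ u) / (u ⬝ᵥ A *ᵥ u) with hc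
      set d : ℝ := (x ⬝ᵥ G *ᵥ u) / (u ⬝ᵥ G *ᵥ u) with hd
      have h1 : ξ⁻¹ * ((x - c • u) ⬝ᵥ A *ᵥ (x - c • u)) ≤ (x - c • u) ⬝ᵥ G *ᵥ (x - c • u) := by
        have h := psd_quad hlow (x - c • u)
        rw [elow] at h; linarith
      have h2 : (x - c • u) ⬝ᵥ G *ᵥ (x - c • u) ≤ η * ((x - c • u) ⬝ᵥ A *ᵥ (x - c • u)) := by
        have h := psd_quad hup (x - c • u)
        rw [eup] at h; linarith
      have h3 : ξ⁻¹ * ((x - d • u) ⬝ᵥ A *ᵥ (x - d • u)) ≤ (x - d • u) ⬝ᵥ G *ᵥ (x - d • u) := by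
        have h := psd_quad hlow (x - d • u)
        rw [elow] at h; linarith
      rw [quad_sub_smul hA.1, quad_sub_smul hG.1] at h1 h2 h3
      have hqA : 0 ≤ x ⬝ᵥ A *ᵥ x := psd_quad hA.posSemidef x
      exact scalar_core _ _ _ _ _ _ _ _ _ _ _ _ _ ha hg hξ hη hφ0 hφ1 hqA
        rfl rfl rfl rfl h1 h2 h3
    have hHerm : (Broyd φ A G u).IsHermitian := by
      simp only [Broyd, if_neg hu, DFPupd, BFGSupd]
      exact (herm_smul _ (((hG.1.sub (herm_smul _ (herm_pair _ _)))).add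
          (herm_smul _ (herm_vmv _)))).add
        (herm_smul _ ((hG.1.sub (herm_smul _ (herm_vmv _))).add (herm_smul _ (herm_vmv _))))
    constructor
    · refine .of_dotProduct_mulVec_nonneg (hHerm.sub (herm_smul _ hA.1)) fun x => ?_
      have hx : star x = x := by simp
      rw [hx, Matrix.sub_mulVec, Matrix.smul_mulVec, dotProduct_sub, dotProduct_smul,
        smul_eq_mul]
      have := (key x).1
      linarith
    · refine .of_dotProduct_mulVec_nonneg ((herm_smul _ hA.1).sub hHerm) fun x => ?_
      have hx : star x = x := by simp
      rw [hx, Matrix.sub_mulVec, Matrix.smul_mulVec, dotProduct_sub, dotProduct_smul,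
        smul_eq_mul]
      have := (key x).2
      linarith
end

section
/- Let A, G be symmetric positive definite n×n matrices with A ⪯ G ⪯ η A for some η ≥ 1, let φ ∈ [0,1] and u any vector. Define σ(A,G) = tr(A⁻¹(G - A)) and θ(A,G,u) = [uᵀ(G-A)A⁻¹(G-A)u / (uᵀ G A⁻¹ G u)]^{1/2} (with θ = 0 if u = 0). Then σ(A,G) - σ(A, Broyd_φ(A,G,u)) ≥ (φ/η + 1 - φ)·θ(A,G,u)². -/
open Matrix

lemma dp_mulVec_symm {n : ℕ} {M : Matrix (Fin n) (Fin n) ℝ} (hM : Mᵀ = M)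
    (x y : Fin n → ℝ) : (M *ᵥ x) ⬝ᵥ y = x ⬝ᵥ (M *ᵥ y) := by
  rw [dotProduct_comm, dotProduct_mulVec, ← mulVec_transpose, hM, dotProduct_comm]

lemma trace_mul_vecMulVec {n : ℕ} (B : Matrix (Fin n) (Fin n) ℝ) (v w : Fin n → ℝ) :
    (B * vecMulVec v w).trace = w ⬝ᵥ B.mulVec v := by
  simp only [Matrix.trace, Matrix.diag, Matrix.mul_apply, Matrix.vecMulVec_apply,
    dotProduct, Matrix.mulVec, Finset.mul_sum]
  exact Finset.sum_congr rfl fun i _ => Finset.sum_congr rfl fun j _ => by ring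

lemma final_arith (η φ a g s q : ℝ) (hη : 1 ≤ η) (hφ0 : 0 ≤ φ) (hφ1 : φ ≤ 1)
    (ha : 0 < a) (hag : a ≤ g) (hq0 : 0 ≤ q) (hs : s = q + 2*g - a)
    (hqm : q ≤ (η-1)*(g-a)) :
    φ*(g/a - 1) + (1-φ)*(s/g - 1) ≥ (φ/η + 1 - φ) * (q/s) := by
  have hg : 0 < g := lt_of_lt_of_le ha hag
  have hspos : 0 < s := by nlinarith
  have hηpos : 0 < η := lt_of_lt_of_le one_pos hη
  have k1 : q/s ≤ s/g - 1 := by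
    rw [div_sub' hg.ne', div_le_div_iff₀ hspos hg]
    nlinarith [mul_nonneg hq0 (sub_nonneg.2 hag), sq_nonneg q,
      mul_nonneg ha.le (sub_nonneg.2 hag), sq_nonneg (g-a)]
  have k2 : q/(η*s) ≤ g/a - 1 := by
    rw [div_sub' ha.ne', div_le_div_iff₀ (mul_pos hηpos hspos) ha]
    nlinarith [mul_nonneg (mul_nonneg hηpos.le (sub_nonneg.2 hag))
      (sub_nonneg.2 (show a ≤ s by nlinarith)), mul_nonneg hq0 ha.le]
  calc (φ/η + 1 - φ) * (q/s) = φ*(q/(η*s)) + (1-φ)*(q/s) := by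
        field_simp; ring
    _ ≤ φ*(g/a - 1) + (1-φ)*(s/g - 1) :=
        add_le_add (mul_le_mul_of_nonneg_left k2 hφ0)
          (mul_le_mul_of_nonneg_left k1 (by linarith))

set_option maxHeartbeats 1000000

theorem sigma_progress {n : ℕ} (A G : Matrix (Fin n) (Fin n) ℝ)
    (hA : A.PosDef) (hG : G.PosDef) (η : ℝ) (hη : 1 ≤ η)
    (hlow : (G - A).PosSemidef) (hup : (η • A - G).PosSemidef)
    (φ : ℝ) (hφ : φ ∈ Set.Icc (0 : ℝ) 1) (u : Fin n → ℝ) :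
    sigmaPot A G - sigmaPot A (Broyd φ A G u) ≥
      (φ / η + 1 - φ) * theta A G u ^ 2 := by
  by_cases hu : u = 0
  · simp [Broyd, theta, hu]
  obtain ⟨a, ha_def⟩ : ∃ x : ℝ, u ⬝ᵥ A *ᵥ u = x := ⟨_, rfl⟩
  obtain ⟨g, hg_def⟩ : ∃ x : ℝ, u ⬝ᵥ G *ᵥ u = x := ⟨_, rfl⟩
  obtain ⟨s, hs_def⟩ : ∃ x : ℝ, u ⬝ᵥ (G * A⁻¹ * G) *ᵥ u = x := ⟨_, rfl⟩
  obtain ⟨q, hq_def⟩ : ∃ x : ℝ, u ⬝ᵥ ((G - A) * A⁻¹ * (G - A)) *ᵥ u = x := ⟨_, rfl⟩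
  have hdet : IsUnit A.det := isUnit_iff_ne_zero.2 hA.det_pos.ne'
  have h1 : A * A⁻¹ = 1 := mul_nonsing_inv A hdet
  have h2 : A⁻¹ * A = 1 := nonsing_inv_mul A hdet
  have hAs : Aᵀ = A := by rw [← conjTranspose_eq_transpose_of_trivial]; exact hA.1
  have hGs : Gᵀ = G := by rw [← conjTranspose_eq_transpose_of_trivial]; exact hG.1
  have hMs : (G - A)ᵀ = G - A := by rw [transpose_sub, hAs, hGs]
  -- positivity of scalars
  have ha : 0 < a := by rw [← ha_def]; simpa using hA.dotProduct_mulVec_pos hu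
  have hga : u ⬝ᵥ (G - A) *ᵥ u = g - a := by
    rw [sub_mulVec, dotProduct_sub, ha_def, hg_def]
  have hag : a ≤ g := by
    have hm0 : 0 ≤ u ⬝ᵥ (G - A) *ᵥ u := by simpa using hlow.dotProduct_mulVec_nonneg u
    rw [hga] at hm0; linarith
  have hq0 : 0 ≤ q := by
    have hpsd : ((G - A)ᴴ * A⁻¹ * (G - A)).PosSemidef :=
      hA.inv.posSemidef.conjTranspose_mul_mul_same (G - A)
    rw [hlow.1] at hpsd
    rw [← hq_def]; simpa using hpsd.dotProduct_mulVec_nonneg u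
  -- scalar dot-product identities
  have e1 : (A *ᵥ u) ⬝ᵥ (A⁻¹ *ᵥ (G *ᵥ u)) = g := by
    rw [dp_mulVec_symm hAs, mulVec_mulVec, h1, one_mulVec, hg_def]
  have e2 : (G *ᵥ u) ⬝ᵥ (A⁻¹ *ᵥ (A *ᵥ u)) = g := by
    rw [mulVec_mulVec, h2, one_mulVec, dotProduct_comm, hg_def]
  have e3 : (A *ᵥ u) ⬝ᵥ (A⁻¹ *ᵥ (A *ᵥ u)) = a := by
    rw [mulVec_mulVec, h2, one_mulVec, dotProduct_comm, ha_def]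
  have e4 : (G *ᵥ u) ⬝ᵥ (A⁻¹ *ᵥ (G *ᵥ u)) = s := by
    rw [dp_mulVec_symm hGs, mulVec_mulVec, mulVec_mulVec, hs_def]
  -- q = s - 2g + a
  have hMid : (G - A) * A⁻¹ * (G - A) = G*(A⁻¹*G) - G*(A⁻¹*A) - (A*A⁻¹)*G + (A*A⁻¹)*A := by
    noncomm_ring
  rw [h1, h2, mul_one, one_mul, one_mul, ← mul_assoc] at hMid
  have hqs : q = s - g - g + a := by
    rw [← hq_def, hMid]
    simp only [sub_mulVec, add_mulVec, dotProduct_sub, dotProduct_add]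
    rw [hs_def, hg_def, ha_def]
  -- Cauchy–Schwarz step: q ≤ (η-1)(g-a)
  have hqm : q ≤ (η-1)*(g-a) := by
    obtain ⟨w, hw_def⟩ : ∃ x : Fin n → ℝ, A⁻¹ *ᵥ ((G - A) *ᵥ u) = x := ⟨_, rfl⟩
    have hwMu : w ⬝ᵥ ((G - A) *ᵥ u) = q := by
      rw [dotProduct_comm, ← hw_def, dp_mulVec_symm hMs, mulVec_mulVec, mulVec_mulVec,
        hq_def]
    have huMw : u ⬝ᵥ ((G - A) *ᵥ w) = q := by
      rw [← dp_mulVec_symm hMs, dotProduct_comm, hwMu]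
    have hAw : A *ᵥ w = (G - A) *ᵥ u := by
      rw [← hw_def, mulVec_mulVec, h1, one_mulVec]
    have hwAw : w ⬝ᵥ (A *ᵥ w) = q := by rw [hAw, hwMu]
    obtain ⟨r, hr_def⟩ : ∃ x : ℝ, w ⬝ᵥ ((G - A) *ᵥ w) = x := ⟨_, rfl⟩
    have hr : r ≤ (η-1)*q := by
      have h0 := hup.dotProduct_mulVec_nonneg w
      simp only [star_trivial, sub_mulVec, smul_mulVec, dotProduct_sub,
        dotProduct_smul, smul_eq_mul] at h0
      rw [hwAw] at h0
      have hrw : w ⬝ᵥ G *ᵥ w - q = r := by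
        rw [← hr_def, sub_mulVec, dotProduct_sub, hwAw]
      linarith
    have hquad : ∀ t : ℝ, 0 ≤ r * (t*t) + (2*q) * t + (g - a) := by
      intro t
      have h0 := hlow.dotProduct_mulVec_nonneg (u + t • w)
      simp only [star_trivial, mulVec_add, mulVec_smul, dotProduct_add, add_dotProduct,
        dotProduct_smul, smul_dotProduct, smul_eq_mul] at h0
      rw [hga, huMw, hwMu, hr_def] at h0
      nlinarith [h0]
    have hdisc : discrim r (2*q) (g - a) ≤ 0 := discrim_le_zero hquad
    rw [discrim] at hdisc
    have hq2 : q^2 ≤ r * (g - a) := by nlinarith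
    rcases eq_or_lt_of_le hq0 with h | hqpos
    · nlinarith [sub_nonneg.2 hag]
    · have h5 : q*q ≤ ((η-1)*(g-a))*q := by
        nlinarith [mul_le_mul_of_nonneg_right hr (sub_nonneg.2 hag)]
      exact le_of_mul_le_mul_right (by linarith [h5]) hqpos
  have hspos : 0 < s := by nlinarith
  -- trace computations
  have hT1 : (A⁻¹ * (G - DFPupd A G u)).trace = g/a - 1 := by
    have hD : G - DFPupd A G u =
        ((u ⬝ᵥ A *ᵥ u)⁻¹) • (vecMulVec (A *ᵥ u) (G *ᵥ u) + vecMulVec (G *ᵥ u) (A *ᵥ u))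
          - (((u ⬝ᵥ G *ᵥ u) / (u ⬝ᵥ A *ᵥ u) + 1) * (u ⬝ᵥ A *ᵥ u)⁻¹) •
            vecMulVec (A *ᵥ u) (A *ᵥ u) := by
      rw [DFPupd]; abel
    rw [hD, ha_def, hg_def]
    simp only [mul_sub, mul_add, Matrix.mul_smul, trace_sub, trace_add, trace_smul,
      smul_eq_mul, trace_mul_vecMulVec]
    rw [e1, e2, e3]
    field_simp
    ring
  have hT2 : (A⁻¹ * (G - BFGSupd A G u)).trace = s/g - 1 := by
    have hgpos : 0 < g := lt_of_lt_of_le ha hag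
    have hB : G - BFGSupd A G u =
        ((u ⬝ᵥ G *ᵥ u)⁻¹) • vecMulVec (G *ᵥ u) (G *ᵥ u)
          - ((u ⬝ᵥ A *ᵥ u)⁻¹) • vecMulVec (A *ᵥ u) (A *ᵥ u) := by
      rw [BFGSupd]; abel
    rw [hB, ha_def, hg_def]
    simp only [mul_sub, Matrix.mul_smul, trace_sub, trace_smul, smul_eq_mul,
      trace_mul_vecMulVec]
    rw [e3, e4]
    field_simp
  have hσ : sigmaPot A G - sigmaPot A (Broyd φ A G u) =
      φ * (g/a - 1) + (1-φ) * (s/g - 1) := by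
    have hB : G - Broyd φ A G u =
        φ • (G - DFPupd A G u) + (1-φ) • (G - BFGSupd A G u) := by
      rw [Broyd, if_neg hu]; module
    have h3 : sigmaPot A G - sigmaPot A (Broyd φ A G u) =
        (A⁻¹ * (G - Broyd φ A G u)).trace := by
      rw [sigmaPot, sigmaPot, ← trace_sub, ← mul_sub, sub_sub_sub_cancel_right]
    rw [h3, hB]
    simp only [mul_add, Matrix.mul_smul, trace_add, trace_smul, smul_eq_mul, hT1, hT2]
  have hθ : theta A G u ^ 2 = q / s := by
    rw [theta, if_neg hu]
    rw [show ((G - A) * A⁻¹ * (G - A)).mulVec u = ((G - A) * A⁻¹ * (G - A)) *ᵥ u from rfl,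
      show (G * A⁻¹ * G).mulVec u = (G * A⁻¹ * G) *ᵥ u from rfl, hq_def, hs_def,
      Real.sq_sqrt (div_nonneg hq0 hspos.le)]
  rw [hσ, hθ]
  exact final_arith η φ a g s q hη hφ.1 hφ.2 ha hag hq0 (by linarith) hqm
end

section
/- If A, G are symmetric matrices with 0 ⪯ G - A ⪯ η A and A positive definite (η ≥ 1 a real number), then (G - A) A⁻¹ (G - A) ⪯ η (G - A). -/
open Matrix

theorem sandwich_ineq {n : ℕ} (A G : Matrix (Fin n) (Fin n) ℝ)
    (hA : A.PosDef) (hG : G.IsSymm) (η : ℝ) (hη : 1 ≤ η)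
    (h1 : (G - A).PosSemidef) (h2 : (η • A - (G - A)).PosSemidef) :
    (η • (G - A) - (G - A) * A⁻¹ * (G - A)).PosSemidef := by
  set E := G - A with hE
  obtain ⟨R, hRps, hRR⟩ : ∃ R : Matrix (Fin n) (Fin n) ℝ, R.PosSemidef ∧ R * R = A :=
    by open scoped MatrixOrder in exact ⟨CFC.sqrt A, (CFC.sqrt_nonneg A).posSemidef, CFC.sqrt_mul_sqrt_self A hA.posSemidef.nonneg⟩
  have hRH : Rᴴ = R := hRps.1
  have hdet : IsUnit R.det := by
    have h : R.det * R.det = A.det := by rw [← det_mul, hRR]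
    have hAdet : A.det ≠ 0 := hA.det_pos.ne'
    exact isUnit_iff_ne_zero.mpr (fun h0 => hAdet (by rw [← h, h0, mul_zero]))
  have hRiR : R⁻¹ * R = 1 := nonsing_inv_mul R hdet
  have hRRi : R * R⁻¹ = 1 := mul_nonsing_inv R hdet
  have hRiH : (R⁻¹)ᴴ = R⁻¹ := by rw [conjTranspose_nonsing_inv, hRH]
  have hAinv : A⁻¹ = R⁻¹ * R⁻¹ := by rw [← hRR, Matrix.mul_inv_rev]
  set B := R⁻¹ * E * R⁻¹ with hB
  have hBps : B.PosSemidef := by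
    have h := h1.mul_mul_conjTranspose_same R⁻¹
    rwa [hRiH] at h
  have hIB : (η • (1 : Matrix (Fin n) (Fin n) ℝ) - B).PosSemidef := by
    have h := h2.mul_mul_conjTranspose_same R⁻¹
    rw [hRiH] at h
    have heq : R⁻¹ * (η • A - E) * R⁻¹ = η • (1 : Matrix (Fin n) (Fin n) ℝ) - B := by
      rw [mul_sub, sub_mul, Matrix.mul_smul, Matrix.smul_mul, hB]
      congr 1
      rw [← hRR, ← Matrix.mul_assoc, hRiR, one_mul, hRRi]
    rwa [heq] at h
  obtain ⟨T, hTps, hTT⟩ : ∃ T : Matrix (Fin n) (Fin n) ℝ, T.PosSemidef ∧ T * T = B :=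
    by open scoped MatrixOrder in exact ⟨CFC.sqrt B, (CFC.sqrt_nonneg B).posSemidef, CFC.sqrt_mul_sqrt_self B hBps.nonneg⟩
  have hTH : Tᴴ = T := hTps.1
  have key : (η • B - B * B).PosSemidef := by
    have h := hIB.mul_mul_conjTranspose_same T
    rw [hTH] at h
    have heq : T * (η • (1 : Matrix (Fin n) (Fin n) ℝ) - B) * T =
        η • B - B * B := by
      rw [mul_sub, sub_mul, Matrix.mul_smul, Matrix.smul_mul, mul_one, hTT, ← hTT,
        ← Matrix.mul_assoc, Matrix.mul_assoc (T * T)]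
    rwa [heq] at h
  have final := key.mul_mul_conjTranspose_same R
  rw [hRH] at final
  have heq : R * (η • B - B * B) * R = η • E - E * A⁻¹ * E := by
    rw [mul_sub, sub_mul, Matrix.mul_smul, Matrix.smul_mul]
    congr 1
    · congr 1
      rw [hB, ← Matrix.mul_assoc, ← Matrix.mul_assoc, hRRi, one_mul,
        Matrix.mul_assoc, hRiR, mul_one]
    · rw [hB, hAinv]
      simp only [Matrix.mul_assoc]
      rw [hRiR, mul_one, ← Matrix.mul_assoc R R⁻¹, hRRi, one_mul]
  rwa [heq] at final
end

section
/- For all real numbers α ≥ β > 0, one has α - ln β - 1 ≥ ω(√(αβ - 2β + 1)), where ω(t) = t - ln(1+t), provided αβ - 2β + 1 ≥ 0. -/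
lemma h_anti : AntitoneOn (fun t : ℝ => t - t ^ 2 / 2 - Real.log (1 + t))
    (Set.Ioi (-1 : ℝ)) := by
  apply antitoneOn_of_deriv_nonpos (convex_Ioi _)
  · apply ContinuousOn.sub
    · fun_prop
    · apply Real.continuousOn_log.comp (by fun_prop)
      intro x hx
      simp only [Set.mem_Ioi] at hx
      simp only [Set.mem_compl_iff, Set.mem_singleton_iff]
      linarith
  · intro x hx
    rw [interior_Ioi] at hx
    have h1 : (1 : ℝ) + x ≠ 0 := by simp only [Set.mem_Ioi] at hx; intro h; linarith
    apply DifferentiableAt.differentiableWithinAt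
    apply DifferentiableAt.sub
    · fun_prop
    · exact (Real.differentiableAt_log h1).comp x (by fun_prop)
  · intro x hx
    rw [interior_Ioi, Set.mem_Ioi] at hx
    have h1 : (0 : ℝ) < 1 + x := by linarith
    have hd : HasDerivAt (fun t : ℝ => t - t ^ 2 / 2 - Real.log (1 + t))
        (1 - x - 1 / (1 + x)) x := by
      have hlog : HasDerivAt (fun t : ℝ => Real.log (1 + t)) (1 / (1 + x)) x := by
        have := (Real.hasDerivAt_log h1.ne').comp x
          ((hasDerivAt_id x).const_add 1)
        simpa [one_div, Function.comp_def] using this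
      have h2 : HasDerivAt (fun t : ℝ => t - t ^ 2 / 2) (1 - x) x := by
        have := ((hasDerivAt_pow 2 x).div_const 2)
        have := (hasDerivAt_id x).sub this
        simpa [Pi.sub_def] using this
      exact h2.sub hlog
    rw [hd.deriv, sub_nonpos, le_div_iff₀ h1]
    nlinarith [sq_nonneg x]

lemma log_ge_quad {t : ℝ} (ht : 0 ≤ t) : t - t ^ 2 / 2 ≤ Real.log (1 + t) := by
  have := h_anti (Set.mem_Ioi.2 (by norm_num : (-1 : ℝ) < 0))
    (Set.mem_Ioi.2 (by linarith : (-1 : ℝ) < t)) ht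
  norm_num at this
  linarith

lemma log_le_quad {t : ℝ} (ht : -1 < t) (ht0 : t ≤ 0) :
    Real.log (1 + t) ≤ t - t ^ 2 / 2 := by
  have := h_anti (Set.mem_Ioi.2 ht) (Set.mem_Ioi.2 (by norm_num : (-1 : ℝ) < 0)) ht0
  norm_num at this
  linarith

theorem aux_omega_ineq (α β : ℝ) (hβ : 0 < β) (hαβ : β ≤ α) :
    α - Real.log β - 1 ≥ omegaFn (Real.sqrt (α * β - 2 * β + 1)) := by
  set s := Real.sqrt (α * β - 2 * β + 1) with hs_def
  have harg : 0 ≤ α * β - 2 * β + 1 := by nlinarith [sq_nonneg (β - 1)]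
  have hs0 : 0 ≤ s := Real.sqrt_nonneg _
  have hs2 : s ^ 2 = α * β - 2 * β + 1 := Real.sq_sqrt harg
  have hs1 : (0 : ℝ) < 1 + s := by linarith
  have hsβ : β - 1 ≤ s := by nlinarith [sq_nonneg (s - (β - 1)), sq_nonneg (s + (β - 1))]
  unfold omegaFn
  rcases le_total 1 α with hα1 | hα1
  · -- case α ≥ 1 : use log x ≤ x - 1 on β/(1+s)
    have hlog : Real.log β - Real.log (1 + s) ≤ β / (1 + s) - 1 := by
      have := Real.log_le_sub_one_of_pos (div_pos hβ hs1)
      rwa [Real.log_div hβ.ne' hs1.ne'] at this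
    have hkey : β / (1 + s) ≤ α - s := by
      rw [div_le_iff₀ hs1]
      nlinarith [mul_nonneg (by linarith : (0:ℝ) ≤ α - 1) (by linarith : (0:ℝ) ≤ 1 + s - β)]
    linarith
  · -- case α ≤ 1
    have hβ1 : β ≤ 1 := le_trans hαβ hα1
    have h1 : s - s ^ 2 / 2 ≤ Real.log (1 + s) := log_ge_quad hs0
    have h2 : Real.log β ≤ (β - 1) - (β - 1) ^ 2 / 2 := by
      have := log_le_quad (t := β - 1) (by linarith) (by linarith)
      simpa using this
    have hfin : α - ((β - 1) - (β - 1) ^ 2 / 2) - 1 ≥ s - (s - s ^ 2 / 2) := by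
      rw [hs2]
      nlinarith [mul_nonneg (by linarith : (0:ℝ) ≤ α - β) (by linarith : (0:ℝ) ≤ 1 - β / 2)]
    linarith
end

section
/- For ω(t) = t - ln(1+t) and all t ≥ 0: t²/(2(1+t)) ≤ t²/(2(1 + 2t/3)) ≤ ω(t) ≤ t²/(2+t). -/
private lemma log1p_deriv (x : ℝ) (hx : (-1:ℝ) < x) :
    HasDerivAt (fun t : ℝ => Real.log (1 + t)) (1 / (1 + x)) x := by
  have h : (1:ℝ) + x ≠ 0 := by linarith
  simpa [Function.comp_def] using (Real.hasDerivAt_log h).comp x ((hasDerivAt_id x).const_add 1)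

private lemma log_lb (t : ℝ) (ht : 0 ≤ t) : 2 * t / (2 + t) ≤ Real.log (1 + t) := by
  set f : ℝ → ℝ := fun t => Real.log (1 + t) - 2 * t / (2 + t) with hf
  have hd : ∀ x ∈ Set.Ici (0:ℝ), HasDerivAt f (1 / (1 + x) - 4 / (2 + x) ^ 2) x := by
    intro x hx
    have hx0 : (0:ℝ) ≤ x := hx
    have h2 : (2:ℝ) + x ≠ 0 := ne_of_gt (by linarith)
    have hq' : HasDerivAt (fun t : ℝ => 2 * t / (2 + t)) (4 / (2 + x) ^ 2) x := by
      have hq := (((hasDerivAt_id x).const_mul 2).div ((hasDerivAt_id x).const_add 2) h2)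
      simp only [id_eq] at hq
      rw [show (4:ℝ) / (2 + x) ^ 2 = (2 * 1 * (2 + x) - 2 * x * 1) / (2 + x) ^ 2 by ring]
      exact hq
    exact ((log1p_deriv x (by linarith)).sub hq')
  have hmono : MonotoneOn f (Set.Ici 0) := by
    apply monotoneOn_of_deriv_nonneg (convex_Ici 0)
    · exact fun x hx => ((hd x hx).continuousAt).continuousWithinAt
    · intro x hx
      rw [interior_Ici] at hx
      exact ((hd x (Set.mem_Ici.mpr (le_of_lt hx))).differentiableAt).differentiableWithinAt
    · intro x hx
      rw [interior_Ici] at hx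
      have hx0 : (0:ℝ) < x := hx
      rw [(hd x (le_of_lt hx0)).deriv]
      have h1 : (0:ℝ) < 1 + x := by linarith
      have h2 : (0:ℝ) < (2 + x) ^ 2 := by nlinarith
      rw [sub_nonneg, div_le_div_iff₀ h2 h1]
      nlinarith
  have := hmono (Set.self_mem_Ici) (ht : t ∈ Set.Ici 0) ht
  simp [hf] at this
  linarith

private lemma log_ub (t : ℝ) (ht : 0 ≤ t) : Real.log (1 + t) ≤ t * (6 + t) / (6 + 4 * t) := by
  set f : ℝ → ℝ := fun t => t * (6 + t) / (6 + 4 * t) - Real.log (1 + t) with hf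
  have hd : ∀ x ∈ Set.Ici (0:ℝ),
      HasDerivAt f ((36 + 12 * x + 4 * x ^ 2) / (6 + 4 * x) ^ 2 - 1 / (1 + x)) x := by
    intro x hx
    have hx0 : (0:ℝ) ≤ x := hx
    have h2 : (6:ℝ) + 4 * x ≠ 0 := ne_of_gt (by linarith)
    have hn : HasDerivAt (fun t : ℝ => t * (6 + t)) (1 * (6 + x) + x * 1) x :=
      (hasDerivAt_id x).mul ((hasDerivAt_id x).const_add 6)
    have hden : HasDerivAt (fun t : ℝ => 6 + 4 * t) 4 x := by
      simpa using ((hasDerivAt_id x).const_mul 4).const_add 6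
    have hq : HasDerivAt (fun t : ℝ => t * (6 + t) / (6 + 4 * t))
        (((1 * (6 + x) + x * 1) * (6 + 4 * x) - x * (6 + x) * 4) / (6 + 4 * x) ^ 2) x :=
      hn.div hden h2
    have hq' : HasDerivAt (fun t : ℝ => t * (6 + t) / (6 + 4 * t))
        ((36 + 12 * x + 4 * x ^ 2) / (6 + 4 * x) ^ 2) x := by
      convert hq using 1; field_simp; ring
    exact hq'.sub (log1p_deriv x (by linarith))
  have hmono : MonotoneOn f (Set.Ici 0) := by
    apply monotoneOn_of_deriv_nonneg (convex_Ici 0)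
    · exact fun x hx => ((hd x hx).continuousAt).continuousWithinAt
    · intro x hx
      rw [interior_Ici] at hx
      exact ((hd x (Set.mem_Ici.mpr (le_of_lt hx))).differentiableAt).differentiableWithinAt
    · intro x hx
      rw [interior_Ici] at hx
      have hx0 : (0:ℝ) < x := hx
      rw [(hd x (le_of_lt hx0)).deriv]
      have h1 : (0:ℝ) < 1 + x := by linarith
      have h2 : (0:ℝ) < (6 + 4 * x) ^ 2 := by nlinarith
      rw [sub_nonneg, div_le_div_iff₀ h1 h2]
      nlinarith
  have := hmono (Set.self_mem_Ici) (ht : t ∈ Set.Ici 0) ht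
  simp [hf] at this
  linarith

theorem omega_bounds (t : ℝ) (ht : 0 ≤ t) :
    t ^ 2 / (2 * (1 + t)) ≤ t ^ 2 / (2 * (1 + 2 * t / 3)) ∧
      t ^ 2 / (2 * (1 + 2 * t / 3)) ≤ omegaFn t ∧
      omegaFn t ≤ t ^ 2 / (2 + t) := by
  have h1 : (0:ℝ) < 1 + t := by linarith
  have h2 : (0:ℝ) < 2 + t := by linarith
  have h3 : (0:ℝ) < 1 + 2 * t / 3 := by linarith
  have hlb := log_lb t ht
  have hub := log_ub t ht
  refine ⟨?_, ?_, ?_⟩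
  · gcongr
    linarith
  · rw [omegaFn]
    have key : t ^ 2 / (2 * (1 + 2 * t / 3)) = t - t * (6 + t) / (6 + 4 * t) := by
      field_simp; ring
    rw [key]
    linarith
  · rw [omegaFn]
    have key : t ^ 2 / (2 + t) = t - 2 * t / (2 + t) := by
      field_simp; ring
    rw [key]
    linarith
end

section
/- Consider minimizing the quadratic f(x) = (1/2)xᵀAx - bᵀx with A symmetric positive definite, by the quasi-Newton iteration x_{k+1} = x_k - G_k⁻¹∇f(x_k), u_k = x_{k+1} - x_k, G_{k+1} = Broyd_{φ_k}(A, G_k, u_k) with arbitrary φ_k ∈ [0,1]. Then for every k ≥ 0, λ_f(x_{k+1}) = θ(A, G_k, u_k)·λ_f(x_k), where λ_f(x) = (∇f(x)ᵀ A⁻¹ ∇f(x))^{1/2} and θ(A,G,u) = [uᵀ(G-A)A⁻¹(G-A)u/(uᵀGA⁻¹Gu)]^{1/2}. -/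
open Matrix

/-- Gradient norm λ_f(x) = ‖∇f(x)‖_{A⁻¹} for the quadratic f(x) = ½xᵀAx - bᵀx. -/
noncomputable def lamQ {n : ℕ} (A : Matrix (Fin n) (Fin n) ℝ) (b x : Fin n → ℝ) : ℝ :=
  Real.sqrt ((A.mulVec x - b) ⬝ᵥ A⁻¹.mulVec (A.mulVec x - b))

theorem quad_lambda_via_theta {n : ℕ} (A : Matrix (Fin n) (Fin n) ℝ) (hA : A.PosDef)
    (b : Fin n → ℝ) (x : ℕ → Fin n → ℝ) (G : ℕ → Matrix (Fin n) (Fin n) ℝ)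
    (φ : ℕ → ℝ) (hφ : ∀ k, φ k ∈ Set.Icc (0 : ℝ) 1)
    (hGpos : ∀ k, (G k).PosDef)
    (hstep : ∀ k, x (k + 1) = x k - (G k)⁻¹.mulVec (A.mulVec (x k) - b))
    (hupd : ∀ k, G (k + 1) = Broyd (φ k) A (G k) (x (k + 1) - x k)) :
    ∀ k, lamQ A b (x (k + 1)) = theta A (G k) (x (k + 1) - x k) * lamQ A b (x k) := by

  intro k
  set g : Fin n → ℝ := A.mulVec (x k) - b with hg
  set u : Fin n → ℝ := x (k + 1) - x k with hu
  have hGdet : IsUnit (G k).det := isUnit_iff_ne_zero.mpr (hGpos k).det_pos.ne'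
  have hueq : u = -(G k)⁻¹.mulVec g := by
    rw [hu, hstep k]; funext i; simp [Matrix.sub_apply, Pi.neg_apply, hg]
  have hGu : (G k).mulVec u = -g := by
    rw [hueq, mulVec_neg, mulVec_mulVec, Matrix.mul_nonsing_inv _ hGdet, one_mulVec]
  have hgrad : A.mulVec (x (k+1)) - b = -((G k - A).mulVec u) := by
    have hx1 : x (k+1) = x k + u := by funext i; simp [hu]
    rw [hx1, mulVec_add, Matrix.sub_mulVec]
    funext i
    have h2 := congrFun hGu i
    simp only [Pi.sub_apply, Pi.neg_apply, Pi.add_apply, hg] at h2 ⊢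
    linarith
  by_cases h0 : u = 0
  · have hg0 : g = 0 := by
      have h3 := hGu; rw [h0, mulVec_zero] at h3
      simpa [neg_eq_zero] using h3.symm
    have hx : x (k+1) = x k := by
      funext i
      have h4 := congrFun hu i
      rw [h0] at h4; simp at h4; linarith
    rw [hx, theta, if_pos h0, zero_mul, lamQ, ← hg, hg0]
    simp
  · rw [theta, if_neg h0]
    have hGsym := (hGpos k).1
    have hAsym := hA.1
    have hGt : (G k)ᵀ = G k := by
      ext i j
      have h := congrFun (congrFun hGsym.eq i) j
      simpa [conjTranspose_apply] using h
    have hAt : Aᵀ = A := by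
      ext i j
      have h := congrFun (congrFun hAsym.eq i) j
      simpa [conjTranspose_apply] using h
    have hsymGA : (G k - A)ᵀ = G k - A := by
      rw [transpose_sub, hGt, hAt]
    have key : ∀ B : Matrix (Fin n) (Fin n) ℝ, Bᵀ = B →
        u ⬝ᵥ (B * A⁻¹ * B).mulVec u = (B.mulVec u) ⬝ᵥ A⁻¹.mulVec (B.mulVec u) := by
      intro B hB
      rw [← mulVec_mulVec, ← mulVec_mulVec, dotProduct_mulVec, ← mulVec_transpose, hB]
    have hAinv : (A⁻¹).PosDef := hA.inv
    have hGune : (G k).mulVec u ≠ 0 := by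
      intro hzero
      apply h0
      have : (G k)⁻¹.mulVec ((G k).mulVec u) = u := by
        rw [mulVec_mulVec, Matrix.nonsing_inv_mul _ hGdet, one_mulVec]
      rw [hzero, mulVec_zero] at this
      exact this.symm
    have hD : 0 < u ⬝ᵥ (G k * A⁻¹ * G k).mulVec u := by
      rw [key (G k) hGt]
      exact hAinv.dotProduct_mulVec_pos hGune
    have hN : 0 ≤ u ⬝ᵥ ((G k - A) * A⁻¹ * (G k - A)).mulVec u := by
      rw [key _ hsymGA]
      exact hAinv.posSemidef.dotProduct_mulVec_nonneg _
    have hlam1 : lamQ A b (x (k+1)) =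
        Real.sqrt (u ⬝ᵥ ((G k - A) * A⁻¹ * (G k - A)).mulVec u) := by
      rw [lamQ, hgrad, key _ hsymGA, mulVec_neg, neg_dotProduct, dotProduct_neg, neg_neg]
    have hlam2 : lamQ A b (x k) = Real.sqrt (u ⬝ᵥ (G k * A⁻¹ * G k).mulVec u) := by
      rw [lamQ, ← hg, key (G k) hGt, hGu, mulVec_neg, neg_dotProduct, dotProduct_neg,
        neg_neg]
    rw [hlam1, hlam2, ← Real.sqrt_mul (div_nonneg hN hD.le), div_mul_cancel₀ _ hD.ne']
end

section
/- If A, G are symmetric positive definite with A ⪯ G ⪯ (L/μ)A (0 < μ ≤ L), then θ(A,G,u) ≤ 1 - μ/L for every u, where θ(A,G,u) = [uᵀ(G-A)A⁻¹(G-A)u/(uᵀGA⁻¹Gu)]^{1/2} (θ(A,G,0) := 0). -/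
open Matrix

lemma dot_self_eigBasis {n : ℕ} {H : Matrix (Fin n) (Fin n) ℝ} (hH : H.IsHermitian) (i : Fin n) :
    (⇑(hH.eigenvectorBasis i) : Fin n → ℝ) ⬝ᵥ ⇑(hH.eigenvectorBasis i) = 1 := by
  have h := hH.eigenvectorBasis.orthonormal.1 i
  have h2 : (inner ℝ (hH.eigenvectorBasis i) (hH.eigenvectorBasis i) : ℝ) = 1 := by
    rw [real_inner_self_eq_norm_sq, h]; norm_num
  rw [← h2]
  simp [EuclideanSpace.inner_eq_star_dotProduct, dotProduct_comm, dotProduct, WithLp.equiv]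
  rw [PiLp.inner_apply] at h2
  simpa only [RCLike.inner_apply, conj_trivial, mul_comm] using h2

lemma quad_posSemidef {n : ℕ} {H : Matrix (Fin n) (Fin n) ℝ} (hH : H.IsHermitian)
    (a b c : ℝ) (hf : ∀ i, 0 ≤ a * hH.eigenvalues i ^ 2 + b * hH.eigenvalues i + c) :
    (a • (H * H) + b • H + c • (1 : Matrix (Fin n) (Fin n) ℝ)).PosSemidef := by
  have hUU : star (hH.eigenvectorUnitary : Matrix (Fin n) (Fin n) ℝ) * (hH.eigenvectorUnitary : Matrix (Fin n) (Fin n) ℝ) = 1 :=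
    (Matrix.mem_unitaryGroup_iff').mp (hH.eigenvectorUnitary).2
  have hUU' : (hH.eigenvectorUnitary : Matrix (Fin n) (Fin n) ℝ) * star (hH.eigenvectorUnitary : Matrix (Fin n) (Fin n) ℝ) = 1 :=
    (Matrix.mem_unitaryGroup_iff).mp (hH.eigenvectorUnitary).2
  set U : Matrix (Fin n) (Fin n) ℝ := (hH.eigenvectorUnitary : Matrix (Fin n) (Fin n) ℝ) with hU
  set D : Matrix (Fin n) (Fin n) ℝ := diagonal hH.eigenvalues with hD
  have hspec : H = U * D * star U := by
    have := hH.spectral_theorem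
    simpa [RCLike.ofReal, hD] using this
  have hdiag : (diagonal (fun i => a * hH.eigenvalues i ^ 2 + b * hH.eigenvalues i + c) : Matrix (Fin n) (Fin n) ℝ)
      = a • (D * D) + b • D + c • 1 := by
    ext i j
    rcases eq_or_ne i j with rfl | hij
    · simp [hD, Matrix.diagonal_apply_eq, Matrix.one_apply_eq, sq, diagonal_mul_diagonal]
    · simp [hD, Matrix.diagonal_apply_ne _ hij, Matrix.one_apply_ne hij, diagonal_mul_diagonal]
  have hHH : H * H = U * (D * D) * star U := by
    calc H * H = U * D * star U * (U * D * star U) := by rw [← hspec]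
      _ = U * (D * (star U * U) * D) * star U := by simp only [Matrix.mul_assoc]
      _ = U * (D * D) * star U := by rw [hUU, Matrix.mul_one]
  have h1 : (1 : Matrix (Fin n) (Fin n) ℝ) = U * 1 * star U := by rw [Matrix.mul_one, hUU']
  have key : a • (H * H) + b • H + c • (1 : Matrix (Fin n) (Fin n) ℝ)
      = U * (diagonal (fun i => a * hH.eigenvalues i ^ 2 + b * hH.eigenvalues i + c)) * star U := by
    rw [hdiag, hHH]
    rw [hspec]
    simp only [Matrix.mul_add, Matrix.add_mul, Matrix.mul_smul, Matrix.smul_mul,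
      Matrix.mul_one, hUU']
  rw [key, Matrix.star_eq_conjTranspose]
  exact Matrix.PosSemidef.mul_mul_conjTranspose_same (Matrix.PosSemidef.diagonal hf) U

lemma eig_bounds {n : ℕ} {H : Matrix (Fin n) (Fin n) ℝ} (hH : H.IsHermitian)
    {α β : ℝ} (h1 : (H - α • 1).PosSemidef) (h2 : (β • 1 - H).PosSemidef) (i : Fin n) :
    α ≤ hH.eigenvalues i ∧ hH.eigenvalues i ≤ β := by
  set v : Fin n → ℝ := ⇑(hH.eigenvectorBasis i) with hv
  have hmul : H *ᵥ v = hH.eigenvalues i • v := hH.mulVec_eigenvectorBasis i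
  have hvv : v ⬝ᵥ v = 1 := dot_self_eigBasis hH i
  have e1 := h1.dotProduct_mulVec_nonneg v
  have e2 := h2.dotProduct_mulVec_nonneg v
  simp only [sub_mulVec, smul_mulVec, one_mulVec, hmul, dotProduct_sub,
    dotProduct_smul, smul_eq_mul, hvv, star_trivial] at e1 e2
  constructor <;> [linarith [e1]; linarith [e2]]


theorem theta_le_one_sub {n : ℕ} (A G : Matrix (Fin n) (Fin n) ℝ)
    (hA : A.PosDef) (hG : G.PosDef) (μ L : ℝ) (hμ : 0 < μ) (hμL : μ ≤ L)
    (hlow : (G - A).PosSemidef) (hup : ((L / μ) • A - G).PosSemidef) :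
    ∀ u : Fin n → ℝ, theta A G u ≤ 1 - μ / L := by
  have hL : 0 < L := lt_of_lt_of_le hμ hμL
  set m : ℝ := μ / L with hm
  have hm0 : 0 < m := div_pos hμ hL
  have hm1 : m ≤ 1 := (div_le_one hL).2 hμL
  set c : ℝ := 1 - m with hc
  have hc0 : 0 ≤ c := by simp [hc]; linarith
  have hLμ : L / μ = m⁻¹ := by rw [hm, inv_div]
  -- square root of A
  open scoped MatrixOrder in
  set S : Matrix (Fin n) (Fin n) ℝ := CFC.sqrt A with hS
  have hSpsd : S.PosSemidef := by
    open scoped MatrixOrder in exact (CFC.sqrt_nonneg A).posSemidef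
  have hS2 : S * S = A := by
    open scoped MatrixOrder in exact CFC.sqrt_mul_sqrt_self A hA.posSemidef.nonneg
  have hdetA : IsUnit A.det := isUnit_iff_ne_zero.2 hA.det_pos.ne'
  have hdetS : IsUnit S.det := by
    have : S.det * S.det = A.det := by rw [← det_mul, hS2]
    exact isUnit_iff_ne_zero.2 (fun h => hA.det_pos.ne' (by rw [← this, h, zero_mul]))
  set R : Matrix (Fin n) (Fin n) ℝ := S⁻¹ with hR
  have hSR : S * R = 1 := mul_nonsing_inv S hdetS
  have hRS : R * S = 1 := nonsing_inv_mul S hdetS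
  have hSh : Sᴴ = S := hSpsd.isHermitian
  have hRh : Rᴴ = R := by rw [hR, conjTranspose_nonsing_inv, hSh]
  have hAinv : A⁻¹ = R * R := by rw [← hS2, Matrix.mul_inv_rev]
  have hAAi : A * A⁻¹ = 1 := mul_nonsing_inv A hdetA
  have hAiA : A⁻¹ * A = 1 := nonsing_inv_mul A hdetA
  have hRAR : R * A * R = 1 := by
    rw [← hS2, show R * (S * S) * R = (R * S) * (S * R) from by simp [Matrix.mul_assoc],
      hRS, Matrix.one_mul, hSR]
  set H : Matrix (Fin n) (Fin n) ℝ := R * G * R with hH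
  have hHherm : H.IsHermitian := by
    show Hᴴ = H
    rw [hH, conjTranspose_mul, conjTranspose_mul, hRh, hG.isHermitian.eq]
    simp [Matrix.mul_assoc]
  have hRGAR : R * (G - A) * R = H - (1:ℝ) • 1 := by
    rw [Matrix.mul_sub, Matrix.sub_mul, hRAR, hH, one_smul]
  have h1 : (H - (1:ℝ) • 1).PosSemidef := by
    have := hlow.conjTranspose_mul_mul_same R
    rwa [hRh, hRGAR] at this
  have h2 : (m⁻¹ • 1 - H).PosSemidef := by
    have : R * ((L / μ) • A - G) * R = m⁻¹ • 1 - H := by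
      rw [Matrix.mul_sub, Matrix.sub_mul, Matrix.mul_smul, Matrix.smul_mul, hRAR, hH, hLμ]
    have h := hup.conjTranspose_mul_mul_same R
    rwa [hRh, this] at h
  have hf : ∀ i, 0 ≤ (c^2 - 1) * hHherm.eigenvalues i ^ 2 + 2 * hHherm.eigenvalues i + (-1) := by
    intro i
    obtain ⟨ht1, ht2⟩ := eig_bounds hHherm h1 h2 i
    set t := hHherm.eigenvalues i
    have hmt : m * t ≤ 1 := by
      have := mul_le_mul_of_nonneg_left ht2 hm0.le
      rwa [mul_inv_cancel₀ hm0.ne'] at this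
    have hfac : 0 ≤ (1 - m*t) * ((2-m)*t - 1) := by
      apply mul_nonneg (by linarith)
      nlinarith
    have : (c^2 - 1) * t ^ 2 + 2 * t + (-1) = (1 - m*t) * ((2-m)*t - 1) := by
      rw [hc]; ring
    linarith [hfac, this.ge, this.le]
  have hN := quad_posSemidef hHherm (c^2 - 1) 2 (-1) hf
  set N : Matrix (Fin n) (Fin n) ℝ :=
    (c^2 - 1) • (H * H) + (2:ℝ) • H + (-1:ℝ) • 1 with hNdef
  have hSHS : S * H * S = G := by
    rw [hH, show S * (R * G * R) * S = (S * R) * G * (R * S) from by simp [Matrix.mul_assoc],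
      hSR, hRS, Matrix.one_mul, Matrix.mul_one]
  have hSH2S : S * (H * H) * S = G * A⁻¹ * G := by
    rw [hH, hAinv,
      show S * (R * G * R * (R * G * R)) * S = (S * R) * (G * ((R * R) * G)) * (R * S) from by
        simp [Matrix.mul_assoc],
      hSR, hRS, Matrix.one_mul, Matrix.mul_one]
    simp [Matrix.mul_assoc]
  have hS1S : S * (1 : Matrix (Fin n) (Fin n) ℝ) * S = A := by
    rw [Matrix.mul_one, hS2]
  have hGAiA : G * A⁻¹ * A = G := by rw [Matrix.mul_assoc, hAiA, Matrix.mul_one]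
  have hAAiG : A * A⁻¹ * G = G := by rw [hAAi, Matrix.one_mul]
  have hAAiA : A * A⁻¹ * A = A := by rw [hAAi, Matrix.one_mul]
  have hid : S * N * S = c^2 • (G * A⁻¹ * G) - (G - A) * A⁻¹ * (G - A) := by
    have hexp : (G - A) * A⁻¹ * (G - A)
        = G * A⁻¹ * G - G - G + A := by
      rw [Matrix.sub_mul, Matrix.sub_mul, Matrix.mul_sub, Matrix.mul_sub, hGAiA, hAAiG, hAAiA]
      abel
    have hlhs : S * N * S
        = (c^2 - 1) • (G * A⁻¹ * G) + (2:ℝ) • G + (-1:ℝ) • A := by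
      rw [hNdef]
      simp only [Matrix.mul_add, Matrix.add_mul, Matrix.mul_smul, Matrix.smul_mul]
      rw [hSH2S, hSHS, hS1S]
    rw [hlhs, hexp]
    module
  intro u
  by_cases hu : u = 0
  · rw [theta, if_pos hu]
    have : μ / L ≤ 1 := hm1
    linarith
  · rw [theta, if_neg hu]
    have hSt : Sᵀ = S := by
      ext i j
      have := congrFun (congrFun hSh i) j
      simpa [Matrix.conjTranspose_apply] using this
    set q1 : ℝ := u ⬝ᵥ ((G - A) * A⁻¹ * (G - A)) *ᵥ u with hq1def
    set q2 : ℝ := u ⬝ᵥ (G * A⁻¹ * G) *ᵥ u with hq2def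
    have hquad : 0 ≤ u ⬝ᵥ (S * N * S) *ᵥ u := by
      have h0 := hN.dotProduct_mulVec_nonneg (S *ᵥ u)
      have heq : u ⬝ᵥ (S * N * S) *ᵥ u = (S *ᵥ u) ⬝ᵥ (N *ᵥ (S *ᵥ u)) := by
        rw [← Matrix.mulVec_mulVec, ← Matrix.mulVec_mulVec, Matrix.dotProduct_mulVec u S,
          ← Matrix.mulVec_transpose, hSt, Matrix.mulVec_mulVec]
      rw [heq]
      simpa using h0
    have hsplit : u ⬝ᵥ (S * N * S) *ᵥ u = c^2 * q2 - q1 := by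
      rw [hid, Matrix.sub_mulVec, dotProduct_sub, Matrix.smul_mulVec, dotProduct_smul,
        smul_eq_mul]
    have hGt : Gᵀ = G := by
      ext i j
      have := congrFun (congrFun hG.isHermitian.eq i) j
      simpa [Matrix.conjTranspose_apply] using this
    have hGu : G *ᵥ u ≠ 0 := by
      intro h
      have h2 := hG.dotProduct_mulVec_pos hu
      rw [h] at h2
      simp at h2
    have hq2 : 0 < q2 := by
      have heq : q2 = (G *ᵥ u) ⬝ᵥ (A⁻¹ *ᵥ (G *ᵥ u)) := by
        rw [hq2def, ← Matrix.mulVec_mulVec, ← Matrix.mulVec_mulVec, Matrix.dotProduct_mulVec u G,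
          ← Matrix.mulVec_transpose, hGt]
      have := (hA.inv).dotProduct_mulVec_pos hGu
      rw [heq]
      simpa using this
    have hq1le : q1 ≤ c^2 * q2 := by
      rw [hsplit] at hquad
      linarith
    have hdiv : q1 / q2 ≤ c^2 := (div_le_iff₀ hq2).2 hq1le
    calc Real.sqrt (q1 / q2) ≤ Real.sqrt (c^2) := Real.sqrt_le_sqrt hdiv
      _ = c := Real.sqrt_sq hc0
end
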